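/- arXiv:1511.02819 — 5 statements merged into one kernel-verified Lean document; each statement's English description precedes it below -/
import Mathlib

section
/- For a family {(Xᵢ, Uᵢ)}ᵢ∈I of U-equivalence spaces, the topology on ∏ Xᵢ induced by the product U-equivalence class ∏ Uᵢ equals the product of the topologies induced by the Uᵢ: T_{∏Uᵢ} = ∏ T_{Uᵢ}. -/
/-- `U` is an equivalence relation on `X`, viewed as a subset of `X × X`. -/
def IsEquivRel {X : Type*} (U : Set (X × X)) : Prop :=
  (∀ x, (x, x) ∈ U) ∧ (∀ x y, (x, y) ∈ U → (y, x) ∈ U) ∧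
    (∀ x y z, (x, y) ∈ U → (y, z) ∈ U → (x, z) ∈ U)

/-- A `U`-equivalence class on `X`: a nonempty collection of equivalence relations
closed under binary intersections. -/
def IsUClass {X : Type*} (𝒰 : Set (Set (X × X))) : Prop :=
  𝒰.Nonempty ∧ (∀ U ∈ 𝒰, IsEquivRel U) ∧ ∀ U ∈ 𝒰, ∀ V ∈ 𝒰, U ∩ V ∈ 𝒰

/-- `(f × f)⁻¹(V)`. -/
def preim2 {X Y : Type*} (f : X → Y) (V : Set (Y × Y)) : Set (X × X) :=
  {p | (f p.1, f p.2) ∈ V}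

/-- `f : (X,𝒰) → (Y,𝒱)` is `U`-equivalently continuous. -/
def UCont {X Y : Type*} (𝒰 : Set (Set (X × X))) (𝒱 : Set (Set (Y × Y))) (f : X → Y) : Prop :=
  ∀ V ∈ 𝒱, preim2 f V ∈ 𝒰

/-- `U[x] = {y | (x,y) ∈ U}`. -/
def cls {X : Type*} (U : Set (X × X)) (x : X) : Set X := {y | (x, y) ∈ U}

/-- The collection of all finite nonempty intersections of members of `S`. -/
def genClass {X : Type*} (S : Set (Set (X × X))) : Set (Set (X × X)) :=
  {U | ∃ T : Finset (Set (X × X)), ↑T ⊆ S ∧ T.Nonempty ∧ U = ⋂₀ ↑T}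

/-- The relative class `𝒱/A`, transported to the subtype `A`. -/
def relClass {Y : Type*} (𝒱 : Set (Set (Y × Y))) (A : Set Y) : Set (Set (A × A)) :=
  preim2 (Subtype.val : A → Y) '' 𝒱

/-- `f : (X,𝒰) → (Y,𝒱)` is `U`-equivalently open. -/
def UOpenMap {X Y : Type*} (𝒰 : Set (Set (X × X))) (𝒱 : Set (Set (Y × Y))) (f : X → Y) : Prop :=
  ∀ U ∈ 𝒰, ∃ V ∈ 𝒱, ∀ x, cls V (f x) ⊆ f '' cls U x

/-- The topology induced by a `U`-equivalence class, generated by the base `{U[x]}`. -/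
def UTop {X : Type*} (𝒰 : Set (Set (X × X))) : TopologicalSpace X :=
  TopologicalSpace.generateFrom {S | ∃ U ∈ 𝒰, ∃ x, S = cls U x}

/-- The product `U`-equivalence class, generated by preimages under the projections. -/
def prodClass {I : Type*} {X : I → Type*} (𝒰 : ∀ i, Set (Set (X i × X i))) :
    Set (Set ((∀ i, X i) × (∀ i, X i))) :=
  genClass {S | ∃ i, ∃ U ∈ 𝒰 i, S = preim2 (fun f => f i) U}

/-- A `U`-equivalence: a bijection which is `U`-equivalently continuous with
`U`-equivalently continuous inverse. -/
def IsUEquiv {X Y : Type*} (𝒰 : Set (Set (X × X))) (𝒱 : Set (Set (Y × Y))) (f : X → Y) : Prop :=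
  Function.Bijective f ∧ UCont 𝒰 𝒱 f ∧
    ∃ g : Y → X, Function.LeftInverse g f ∧ Function.RightInverse g f ∧ UCont 𝒱 𝒰 g

/-- A `U`-embedding: injective, and a `U`-equivalence onto its range with the relative class. -/
def IsUEmbedding {X Y : Type*} (𝒰 : Set (Set (X × X))) (𝒱 : Set (Set (Y × Y))) (f : X → Y) :
    Prop :=
  Function.Injective f ∧ IsUEquiv 𝒰 (relClass 𝒱 (Set.range f)) (Set.rangeFactorization f)

/-- Total boundedness of a `U`-equivalence space. -/
def TotallyBddU {X : Type*} (𝒰 : Set (Set (X × X))) : Prop :=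
  ∀ U ∈ 𝒰, ∃ t : Finset X, ∀ x : X, ∃ y ∈ t, (y, x) ∈ U

/-- `φ : (Y,𝒱) → Z` is transverse to `Y`: `(φ×φ)⁻¹(ΔZ) ∩ V = ΔY` for some `V ∈ 𝒱`. -/
def Transv {Y Z : Type*} (𝒱 : Set (Set (Y × Y))) (φ : Y → Z) : Prop :=
  ∃ V ∈ 𝒱, ∀ y y', (y, y') ∈ V → φ y = φ y' → y = y'

/-- `f : X → (Y,𝒱)` is a `U`-equivalent surjection. -/
def USurjOn {X Y : Type*} (𝒱 : Set (Set (Y × Y))) (f : X → Y) : Prop :=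
  ∀ y : Y, ∀ V ∈ 𝒱, ∃ x : X, y ∈ cls V (f x)

/-- `D` is `U`-equivalently dense in `(X,𝒰)`. -/
def UDense {X : Type*} (𝒰 : Set (Set (X × X))) (D : Set X) : Prop :=
  ∀ x : X, ∀ U ∈ 𝒰, ∃ a ∈ D, (a, x) ∈ U

theorem stmt9 {I : Type*} {Xi : I → Type*}
    (𝒰 : ∀ i, Set (Set (Xi i × Xi i))) (h𝒰 : ∀ i, IsUClass (𝒰 i)) :
    UTop (prodClass 𝒰) = @Pi.topologicalSpace I Xi (fun i => UTop (𝒰 i)) := by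
  apply le_antisymm
  · -- UTop(prodClass) is finer than the product topology
    show UTop (prodClass 𝒰) ≤
      ⨅ i, TopologicalSpace.induced (fun f : ∀ j, Xi j => f i) (UTop (𝒰 i))
    refine le_iInf fun i => ?_
    simp only [UTop]
    rw [induced_generateFrom_eq]
    refine le_generateFrom fun s hs => ?_
    obtain ⟨t, ⟨U, hU, x, rfl⟩, rfl⟩ := hs
    have hrw : (fun f : ∀ j, Xi j => f i) ⁻¹' cls U x
        = ⋃ f ∈ (fun f : ∀ j, Xi j => f i) ⁻¹' cls U x,
            cls (preim2 (fun g : ∀ j, Xi j => g i) U) f := by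
      ext g
      constructor
      · intro hg
        exact Set.mem_biUnion hg (((h𝒰 i).2.1 U hU).1 (g i))
      · rintro ⟨_, ⟨f, rfl⟩, _, ⟨hf, rfl⟩, hg⟩
        exact ((h𝒰 i).2.1 U hU).2.2 x (f i) (g i) hf hg
    rw [hrw]
    letI : TopologicalSpace (∀ j, Xi j) :=
      TopologicalSpace.generateFrom {S | ∃ U ∈ prodClass 𝒰, ∃ x, S = cls U x}
    refine isOpen_biUnion fun f hf => TopologicalSpace.GenerateOpen.basic _ ?_
    refine ⟨preim2 (fun g : ∀ j, Xi j => g i) U, ?_, f, rfl⟩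
    exact ⟨{preim2 (fun g : ∀ j, Xi j => g i) U},
      by simpa using ⟨i, U, hU, rfl⟩, Finset.singleton_nonempty _, by simp⟩
  · refine le_generateFrom fun s hs => ?_
    obtain ⟨W, ⟨T, hTsub, hTne, rfl⟩, f, rfl⟩ := hs
    letI : ∀ i, TopologicalSpace (Xi i) := fun i => UTop (𝒰 i)
    have hcls : cls (⋂₀ (↑T : Set (Set ((∀ j, Xi j) × (∀ j, Xi j))))) f
        = ⋂ S ∈ T, cls S f := by
      ext g; simp [cls, Set.mem_sInter]
    rw [hcls]
    refine isOpen_biInter_finset fun S hS => ?_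
    obtain ⟨i, U, hU, rfl⟩ := hTsub hS
    have heq : cls (preim2 (fun g : ∀ j, Xi j => g i) U) f
        = (fun g : ∀ j, Xi j => g i) ⁻¹' cls U (f i) := rfl
    rw [heq]
    exact (continuous_apply i).isOpen_preimage _
      (TopologicalSpace.GenerateOpen.basic _ ⟨U, hU, f i, rfl⟩)
end

section
/- Let (X,U) be a rich U-equivalence space (X² ∈ U) and A ⊆ X. The following are equivalent: (a) the inclusion i : (A, U/A) → (X,U) is U-equivalently open; (b) for each U ∈ U there exists V ∈ U with V[x] ⊆ U[x] ∩ A for all x ∈ A; (c) there exists V₀ ∈ U with V₀[x] ⊆ A for all x ∈ A. -/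
theorem stmt10 {X : Type*} (𝒰 : Set (Set (X × X))) (h𝒰 : IsUClass 𝒰)
    (hrich : (Set.univ : Set (X × X)) ∈ 𝒰) (A : Set X) :
    List.TFAE [
      UOpenMap (relClass 𝒰 A) 𝒰 (Subtype.val : A → X),
      ∀ U ∈ 𝒰, ∃ V ∈ 𝒰, ∀ x ∈ A, cls V x ⊆ cls U x ∩ A,
      ∃ V₀ ∈ 𝒰, ∀ x ∈ A, cls V₀ x ⊆ A] := by
  tfae_have 1 → 2 := by
    intro h U hU
    obtain ⟨V, hV, hVsub⟩ := h (preim2 (Subtype.val : A → X) U) ⟨U, hU, rfl⟩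
    refine ⟨V, hV, fun x hx y hy => ?_⟩
    obtain ⟨a, ha, rfl⟩ := hVsub ⟨x, hx⟩ hy
    exact ⟨ha, a.2⟩
  tfae_have 2 → 3 := by
    intro h
    obtain ⟨V, hV, hVsub⟩ := h Set.univ hrich
    exact ⟨V, hV, fun x hx y hy => (hVsub x hx hy).2⟩
  tfae_have 3 → 1 := by
    rintro ⟨V₀, hV₀, hsub⟩ U' ⟨U, hU, rfl⟩
    refine ⟨U ∩ V₀, h𝒰.2.2 U hU V₀ hV₀, fun x y hy => ?_⟩
    have hyA : y ∈ A := hsub x x.2 hy.2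
    exact ⟨⟨y, hyA⟩, hy.1, rfl⟩
  tfae_finish
end

section
/- Let (X,U), (Y,V), (Z,W) be U-equivalence spaces with U rich, let α, β : X → Y be U-equivalently continuous, and let φ : Y → Z be transverse to Y. If φ ∘ α = φ ∘ β, then the coincidence set C(α,β) = {x : α(x) = β(x)} is U-equivalently open in X, i.e. there exists U₀ ∈ U with U₀[x] ⊆ C(α,β) for all x ∈ C(α,β). -/
theorem stmt11 {X Y Z : Type*} (𝒰 : Set (Set (X × X))) (𝒱 : Set (Set (Y × Y)))
    (𝒲 : Set (Set (Z × Z))) (h𝒰 : IsUClass 𝒰) (h𝒱 : IsUClass 𝒱) (h𝒲 : IsUClass 𝒲)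
    (hrich : (Set.univ : Set (X × X)) ∈ 𝒰)
    (α β : X → Y) (hα : UCont 𝒰 𝒱 α) (hβ : UCont 𝒰 𝒱 β)
    (φ : Y → Z) (hφ : Transv 𝒱 φ) (hcomm : φ ∘ α = φ ∘ β) :
    ∃ U₀ ∈ 𝒰, ∀ x ∈ {x' : X | α x' = β x'}, cls U₀ x ⊆ {x' : X | α x' = β x'} := by
  obtain ⟨V, hV, htr⟩ := hφ
  obtain ⟨Vrefl, Vsymm, Vtrans⟩ := h𝒱.2.1 V hV
  refine ⟨preim2 α V ∩ preim2 β V, h𝒰.2.2 _ (hα V hV) _ (hβ V hV), ?_⟩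
  intro x hx y hy
  obtain ⟨hαV, hβV⟩ := hy
  have hx' : α x = β x := hx
  have h1 : (α y, β y) ∈ V :=
    Vtrans _ _ _ (Vsymm _ _ hαV) (hx' ▸ hβV)
  exact htr _ _ h1 (congrFun hcomm y)
end

section
/- Every nonempty subset of a connected U-equivalence space (X,U) is U-equivalently dense in X. (Key lemma: for any U ∈ U and A ⊆ X, the set U[A] = ⋃_{x∈A} U[x] is clopen in (X, T_U).) -/
theorem stmt15 {X : Type*} (𝒰 : Set (Set (X × X))) (h𝒰 : IsUClass 𝒰)
    (hconn : @ConnectedSpace X (UTop 𝒰)) :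
    (∀ U ∈ 𝒰, ∀ A : Set X, @IsClopen X (UTop 𝒰) (⋃ a ∈ A, cls U a)) ∧
      ∀ A : Set X, A.Nonempty → UDense 𝒰 A := by
  letI : TopologicalSpace X := UTop 𝒰
  obtain ⟨-, heq, -⟩ := h𝒰
  have key : ∀ U ∈ 𝒰, ∀ A : Set X, IsClopen (⋃ a ∈ A, cls U a) := by
    intro U hU A
    obtain ⟨hrefl, hsymm, htrans⟩ := heq U hU
    have hopen : ∀ x, IsOpen (cls U x) := fun x =>
      TopologicalSpace.GenerateOpen.basic _ ⟨U, hU, x, rfl⟩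
    constructor
    · rw [← isOpen_compl_iff]
      have hc : (⋃ a ∈ A, cls U a)ᶜ = ⋃ x ∈ (⋃ a ∈ A, cls U a)ᶜ, cls U x := by
        ext y
        simp only [Set.mem_iUnion, Set.mem_compl_iff, exists_prop]
        constructor
        · intro hy
          exact ⟨y, hy, hrefl y⟩
        · rintro ⟨x, hx, hxy⟩ ⟨a, ha, hay⟩
          exact hx ⟨a, ha, htrans a y x hay (hsymm x y hxy)⟩
      rw [hc]
      exact isOpen_biUnion fun x _ => hopen x
    · exact isOpen_biUnion fun a _ => hopen a
  refine ⟨key, fun A hA x U hU => ?_⟩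
  obtain ⟨a0, ha0⟩ := hA
  obtain ⟨hrefl, -, -⟩ := heq U hU
  have hne : (⋃ a ∈ A, cls U a).Nonempty :=
    ⟨a0, Set.mem_biUnion ha0 (hrefl a0)⟩
  have := (key U hU A).eq_univ hne
  have hx : x ∈ ⋃ a ∈ A, cls U a := this ▸ Set.mem_univ x
  obtain ⟨a, ha, hax⟩ := Set.mem_iUnion₂.mp hx
  exact ⟨a, ha, hax⟩
end

section
/- Let (X,U), (Y,V), (Z,W) be U-equivalence spaces with U rich and (X,U) connected, let α,β : X → Y be U-equivalently continuous, φ : Y → Z transverse to Y, suppose φ ∘ α = φ ∘ β and α(x₀) = β(x₀) for some x₀ ∈ X. Then α = β. -/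
theorem stmt16 {X Y Z : Type*} (𝒰 : Set (Set (X × X))) (𝒱 : Set (Set (Y × Y)))
    (𝒲 : Set (Set (Z × Z))) (h𝒰 : IsUClass 𝒰) (h𝒱 : IsUClass 𝒱) (h𝒲 : IsUClass 𝒲)
    (hrich : (Set.univ : Set (X × X)) ∈ 𝒰)
    (hconn : @ConnectedSpace X (UTop 𝒰))
    (α β : X → Y) (hα : UCont 𝒰 𝒱 α) (hβ : UCont 𝒰 𝒱 β)
    (φ : Y → Z) (hφ : Transv 𝒱 φ) (hcomm : φ ∘ α = φ ∘ β)
    (x₀ : X) (hx₀ : α x₀ = β x₀) :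
    α = β := by
  classical
  letI : TopologicalSpace X := UTop 𝒰
  obtain ⟨V, hV, hVsep⟩ := hφ
  obtain ⟨Vrefl, Vsymm, Vtrans⟩ := h𝒱.2.1 V hV
  set U : Set (X × X) := preim2 α V ∩ preim2 β V with hUdef
  have hU : U ∈ 𝒰 := h𝒰.2.2 _ (hα V hV) _ (hβ V hV)
  obtain ⟨Urefl, Usymm, Utrans⟩ := h𝒰.2.1 U hU
  set E : Set X := {x | α x = β x} with hE
  have key : ∀ x x', (x, x') ∈ U → α x = β x → α x' = β x' := by
    intro x x' hxx' hx
    obtain ⟨hαV, hβV⟩ := hxx'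
    have h1 : (α x', β x) ∈ V := by
      rw [← hx]; exact Vsymm _ _ hαV
    have h2 : (α x', β x') ∈ V := Vtrans _ _ _ h1 hβV
    exact hVsep _ _ h2 (congrFun hcomm x')
  have hopenCls : ∀ x : X, IsOpen (cls U x) := fun x =>
    TopologicalSpace.GenerateOpen.basic _ ⟨U, hU, x, rfl⟩
  have hEopen : IsOpen E := by
    have : E = ⋃ x ∈ E, cls U x := by
      ext z; constructor
      · intro hz; exact Set.mem_biUnion hz (Urefl z)
      · intro hz
        obtain ⟨x, hx, hzx⟩ := Set.mem_iUnion₂.1 hz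
        exact key x z hzx hx
    rw [this]
    exact isOpen_biUnion fun x _ => hopenCls x
  have hEcopen : IsOpen Eᶜ := by
    have : Eᶜ = ⋃ x ∈ Eᶜ, cls U x := by
      ext z; constructor
      · intro hz; exact Set.mem_biUnion hz (Urefl z)
      · intro hz
        obtain ⟨x, hx, hzx⟩ := Set.mem_iUnion₂.1 hz
        intro hzE
        exact hx (key z x (Usymm _ _ hzx) hzE)
    rw [this]
    exact isOpen_biUnion fun x _ => hopenCls x
  have hclopen : IsClopen E := ⟨⟨hEcopen⟩, hEopen⟩
  have : E = Set.univ := hclopen.eq_univ ⟨x₀, hx₀⟩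
  funext x
  have hx : x ∈ E := this ▸ Set.mem_univ x
  exact hx
end
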